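/- arXiv:1301.3127 — 2 statements merged into one kernel-verified Lean document; each statement's English description precedes it below -/
import Mathlib

section
/- Let G be an adaptive simulation graph for a timed automaton A. Then A has an accepting run if and only if some node of G labeled (q, Z, L, U) with q ∈ Acc and Z ≠ ∅ is reachable from the initial node of G by edges of G. -/
/-! Common framework: clocks, valuations, guards, zones, timed automata,
LU-bounds and LU-abstraction, following the paper's definitions. -/

abbrev Val (X : Type*) := X → NNReal

/-- Time delay: `v + δ`. -/
def delay {X : Type*} (v : Val X) (δ : NNReal) : Val X := fun x => v x + δ

open Classical in
/-- Reset `[R]v`. -/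
noncomputable def resetV {X : Type*} (R : Set X) (v : Val X) : Val X :=
  fun x => if x ∈ R then 0 else v x

/-- The valuation `0̄`. -/
def zeroVal (X : Type*) : Val X := fun _ => 0

/-- Comparison operators for atomic clock constraints. -/
inductive Cmp where
  | lt | le | eq | ge | gt

/-- Satisfaction of `a # c`. -/
def Cmp.sat : Cmp → NNReal → ℕ → Prop
  | .lt, a, c => a < (c : NNReal)
  | .le, a, c => a ≤ (c : NNReal)
  | .eq, a, c => a = (c : NNReal)
  | .ge, a, c => (c : NNReal) ≤ a
  | .gt, a, c => (c : NNReal) < a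

/-- An atomic clock constraint `x # c`. -/
structure Atomic (X : Type*) where
  clock : X
  cmp : Cmp
  bound : ℕ

/-- A guard is a finite conjunction of atomic constraints. -/
abbrev Guard (X : Type*) := List (Atomic X)

/-- `v ⊨ g`. -/
def satG {X : Type*} (v : Val X) (g : Guard X) : Prop :=
  ∀ a ∈ g, a.cmp.sat (v a.clock) a.bound

/-- Lower-bound constraints: `x > c` or `x ≥ c`. -/
def Atomic.isLower {X : Type*} (a : Atomic X) : Prop := a.cmp = Cmp.gt ∨ a.cmp = Cmp.ge

/-- Upper-bound constraints: `x < c` or `x ≤ c`. -/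
def Atomic.isUpper {X : Type*} (a : Atomic X) : Prop := a.cmp = Cmp.lt ∨ a.cmp = Cmp.le

/-- A set `W` of valuations is time-elapsed. -/
def TimeElapsed {X : Type*} (W : Set (Val X)) : Prop :=
  ∀ v ∈ W, ∀ δ : NNReal, delay v δ ∈ W

/-- `Post_{g,R}(W) = { [R]v + δ | v ∈ W, v ⊨ g, δ ∈ ℝ≥0 }`. -/
def post {X : Type*} (g : Guard X) (R : Set X) (W : Set (Val X)) : Set (Val X) :=
  { w | ∃ v ∈ W, satG v g ∧ ∃ δ : NNReal, w = delay (resetV R v) δ }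

/-- LU-bounds take values in `ℕ ∪ {−∞}`. -/
abbrev Bnd := WithBot ℕ

/-- `b < r` where `b ∈ ℕ ∪ {−∞}` and `r ∈ ℝ≥0` (every real is greater than `−∞`). -/
def Bnd.ltVal (b : Bnd) (r : NNReal) : Prop :=
  ∀ n : ℕ, b = (n : Bnd) → (n : NNReal) < r

/-- The LU-preorder `v ⊑_LU v'`. -/
def luLe {X : Type*} (L U : X → Bnd) (v v' : Val X) : Prop :=
  ∀ x, (v' x < v x → Bnd.ltVal (L x) (v' x)) ∧ (v x < v' x → Bnd.ltVal (U x) (v x))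

/-- `a_LU(W)`. -/
def aLU {X : Type*} (L U : X → Bnd) (W : Set (Val X)) : Set (Val X) :=
  { v | ∃ v' ∈ W, luLe L U v v' }

/-- A timed automaton `(Q, q0, X, T, Acc)` (finiteness of `Q`, `X`, `trans`
is imposed as hypotheses of the theorems). -/
structure TA (Q X : Type*) where
  q0 : Q
  trans : Set (Q × Guard X × Set X × Q)
  acc : Set Q

/-- One delay or action transition between configurations. -/
def step {Q X : Type*} (A : TA Q X) (c c' : Q × Val X) : Prop :=
  (c'.1 = c.1 ∧ ∃ δ : NNReal, c'.2 = delay c.2 δ) ∨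
  (∃ g R, (c.1, g, R, c'.1) ∈ A.trans ∧ satG c.2 g ∧ c'.2 = resetV R c.2)

/-- There is a run (finite alternating sequence of delay and action transitions)
from `c` to `c'`. -/
def Reach {Q X : Type*} (A : TA Q X) : (Q × Val X) → (Q × Val X) → Prop :=
  Relation.ReflTransGen (step A)

/-- Symbolic transition `(q,W) ⇒^t (q', Post_t(W))`, union over all `t ∈ T`. -/
def symbStep {Q X : Type*} (A : TA Q X) (p p' : Q × Set (Val X)) : Prop :=
  ∃ g R, (p.1, g, R, p'.1) ∈ A.trans ∧ p'.2 = post g R p.2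

/-- The initial zone `Z0 = { 0̄ + δ | δ ∈ ℝ≥0 }`. -/
def Z0 (X : Type*) : Set (Val X) := { v | ∃ δ : NNReal, v = delay (zeroVal X) δ }

/-- Time-abstract simulation for `A`. -/
def IsTASim {Q X : Type*} (A : TA Q X) (S : (Q × Val X) → (Q × Val X) → Prop) : Prop :=
  (∀ c c', S c c' → c.1 = c'.1) ∧
  (∀ (q : Q) (v v' : Val X) (δ : NNReal) (g : Guard X) (R : Set X) (q1 : Q),
    S (q, v) (q, v') → (q, g, R, q1) ∈ A.trans → satG (delay v δ) g →
    ∃ δ' : NNReal, satG (delay v' δ') g ∧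
      S (q1, resetV R (delay v δ)) (q1, resetV R (delay v' δ')))

/-- Abstraction induced by a preorder `≼` on valuations. -/
def aAbs {X : Type*} (pre : Val X → Val X → Prop) (W : Set (Val X)) : Set (Val X) :=
  { v | ∃ v' ∈ W, pre v v' }

/-- Abstract transition `(q,W) ⇒_a (q', a(W'))` whenever `W = a(W)` and `(q,W) ⇒ (q',W')`. -/
def absStep {Q X : Type*} (A : TA Q X) (pre : Val X → Val X → Prop)
    (p p' : Q × Set (Val X)) : Prop :=
  p.2 = aAbs pre p.2 ∧ ∃ W', symbStep A p (p'.1, W') ∧ p'.2 = aAbs pre W'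

/-- An adaptive simulation graph (ASG) for the timed automaton `A`. -/
structure ASG {Q X : Type*} (A : TA Q X) where
  Node : Type
  st : Node → Q
  zone : Node → Set (Val X)
  Lb : Node → X → Bnd
  Ub : Node → X → Bnd
  init : Node
  tent : Node → Prop
  edge : Node → Node → Prop
  /-- the covering node associated to a tentative node -/
  cov : Node → Node
  /-- every node is reachable from the initial node by edges -/
  reach : ∀ n, Relation.ReflTransGen edge init n
  /-- G1 -/
  g1_st : st init = A.q0
  g1_zone : zone init = Z0 X
  /-- G2: every non-tentative node has all its symbolic successors -/
  g2 : ∀ n, ¬ tent n → ∀ g R q', (st n, g, R, q') ∈ A.trans →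
        post g R (zone n) ≠ ∅ →
        ∃ n', edge n n' ∧ st n' = q' ∧ zone n' = post g R (zone n)
  /-- G2: every edge of the graph arises in this way -/
  g2' : ∀ n n', edge n n' → ¬ tent n ∧
        ∃ g R, (st n, g, R, st n') ∈ A.trans ∧ zone n' = post g R (zone n) ∧
               post g R (zone n) ≠ ∅
  /-- G3 -/
  g3 : ∀ n, tent n → ¬ tent (cov n) ∧ st (cov n) = st n ∧
        zone n ⊆ aLU (Lb (cov n)) (Ub (cov n)) (zone (cov n))
  /-- I1 -/
  i1 : ∀ n g R q', (st n, g, R, q') ∈ A.trans → post g R (zone n) = ∅ →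
        post g R (aLU (Lb n) (Ub n) (zone n)) = ∅
  /-- I2 -/
  i2 : ∀ n n', edge n n' → ∀ g R, (st n, g, R, st n') ∈ A.trans →
        zone n' = post g R (zone n) →
        post g R (aLU (Lb n) (Ub n) (zone n)) ⊆ aLU (Lb n') (Ub n') (zone n')
  /-- I3 -/
  i3 : ∀ n, tent n → ∀ x, Lb (cov n) x ≤ Lb n x ∧ Ub (cov n) x ≤ Ub n x

/-! Auxiliary lemmas. -/

lemma delay_zero {X : Type*} (v : Val X) : delay v 0 = v := by
  funext x; simp [delay]

lemma delay_delay {X : Type*} (v : Val X) (δ δ' : NNReal) :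
    delay (delay v δ) δ' = delay v (δ + δ') := by
  funext x; simp [delay, add_assoc]

lemma Bnd.ltVal_mono {b b' : Bnd} {r : NNReal} (h : b' ≤ b) (hb : Bnd.ltVal b r) :
    Bnd.ltVal b' r := by
  intro n hn
  subst hn
  rcases WithBot.coe_le_iff.mp h with ⟨m, rfl, hnm⟩
  exact lt_of_le_of_lt (by exact_mod_cast hnm) (hb m rfl)

lemma luLe_refl {X : Type*} (L U : X → Bnd) (v : Val X) : luLe L U v v := by
  intro x
  exact ⟨fun h => absurd h (lt_irrefl _), fun h => absurd h (lt_irrefl _)⟩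

lemma Bnd.ltVal_le {b : Bnd} {r r' : NNReal} (h : r ≤ r') (hb : Bnd.ltVal b r) :
    Bnd.ltVal b r' := fun n hn => lt_of_lt_of_le (hb n hn) h

lemma luLe_trans {X : Type*} {L U : X → Bnd} {u v w : Val X}
    (h1 : luLe L U u v) (h2 : luLe L U v w) : luLe L U u w := by
  intro x
  constructor
  · intro hlt
    rcases lt_or_ge (w x) (v x) with h | h
    · exact (h2 x).1 h
    · exact Bnd.ltVal_le h ((h1 x).1 (lt_of_le_of_lt h hlt))
  · intro hlt
    rcases lt_or_ge (u x) (v x) with h | h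
    · exact (h1 x).2 h
    · exact Bnd.ltVal_le h ((h2 x).2 (lt_of_le_of_lt h hlt))

lemma luLe_mono {X : Type*} {L U L' U' : X → Bnd} {v w : Val X}
    (hL : ∀ x, L' x ≤ L x) (hU : ∀ x, U' x ≤ U x)
    (h : luLe L U v w) : luLe L' U' v w := by
  intro x
  exact ⟨fun hlt => Bnd.ltVal_mono (hL x) ((h x).1 hlt),
         fun hlt => Bnd.ltVal_mono (hU x) ((h x).2 hlt)⟩

lemma luLe_delay {X : Type*} {L U : X → Bnd} {v w : Val X} (δ : NNReal)
    (h : luLe L U v w) : luLe L U (delay v δ) (delay w δ) := by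
  intro x
  constructor
  · intro hlt
    have hwv : w x < v x := by
      have := hlt; simpa [delay] using this
    exact Bnd.ltVal_le (by simp [delay]) ((h x).1 hwv)
  · intro hlt
    have hvw : v x < w x := by
      have := hlt; simpa [delay] using this
    exact Bnd.ltVal_le (by simp [delay]) ((h x).2 hvw)

lemma timeElapsed_Z0 (X : Type*) : TimeElapsed (Z0 X) := by
  rintro v ⟨δ, rfl⟩ δ'
  exact ⟨δ + δ', (delay_delay _ _ _)⟩

lemma timeElapsed_post {X : Type*} (g : Guard X) (R : Set X) (W : Set (Val X)) :
    TimeElapsed (post g R W) := by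
  rintro v ⟨u, hu, hg, δ, rfl⟩ δ'
  exact ⟨u, hu, hg, δ + δ', (delay_delay _ _ _)⟩

lemma asg_zone_timeElapsed {Q X : Type*} {A : TA Q X} (G : ASG A) (n : G.Node) :
    TimeElapsed (G.zone n) := by
  rcases (G.reach n).cases_tail with h | ⟨m, _, hmn⟩
  · rw [h, G.g1_zone]; exact timeElapsed_Z0 X
  · rcases G.g2' m n hmn with ⟨_, g, R, _, hz, _⟩
    rw [hz]; exact timeElapsed_post g R _

/-- Every valuation in a node's zone is concretely reachable. -/
lemma asg_sound {Q X : Type*} {A : TA Q X} (G : ASG A) (n : G.Node) :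
    ∀ v ∈ G.zone n, Reach A (A.q0, zeroVal X) (G.st n, v) := by
  have h := G.reach n
  induction h with
  | refl =>
    intro v hv
    rw [G.g1_zone] at hv
    rcases hv with ⟨δ, rfl⟩
    refine Relation.ReflTransGen.single ?_
    exact Or.inl ⟨by simp [G.g1_st], δ, rfl⟩
  | tail _ hmn ih =>
    rename_i m n' _
    intro v hv
    rcases G.g2' m n' hmn with ⟨_, g, R, htr, hz, _⟩
    rw [hz] at hv
    rcases hv with ⟨u, hu, hg, δ, rfl⟩
    have h1 := ih u hu
    have h2 : step A (G.st m, u) (G.st n', resetV R u) :=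
      Or.inr ⟨g, R, htr, hg, rfl⟩
    have h3 : step A (G.st n', resetV R u) (G.st n', delay (resetV R u) δ) :=
      Or.inl ⟨rfl, δ, rfl⟩
    exact (h1.tail h2).tail h3

/-- A configuration is covered by a non-tentative node. -/
def CoveredBy {Q X : Type*} {A : TA Q X} (G : ASG A) (c : Q × Val X) : Prop :=
  ∃ n : G.Node, ¬ G.tent n ∧ G.st n = c.1 ∧ c.2 ∈ aLU (G.Lb n) (G.Ub n) (G.zone n)

lemma coveredBy_of_mem_aLU {Q X : Type*} {A : TA Q X} (G : ASG A) (n : G.Node)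
    {q : Q} {v : Val X} (hst : G.st n = q) (hv : v ∈ aLU (G.Lb n) (G.Ub n) (G.zone n)) :
    CoveredBy G (q, v) := by
  by_cases ht : G.tent n
  · rcases G.g3 n ht with ⟨hnt, hstc, hsub⟩
    rcases hv with ⟨w, hw, hvw⟩
    rcases hsub hw with ⟨w', hw', hww'⟩
    have hL : ∀ x, G.Lb (G.cov n) x ≤ G.Lb n x := fun x => (G.i3 n ht x).1
    have hU : ∀ x, G.Ub (G.cov n) x ≤ G.Ub n x := fun x => (G.i3 n ht x).2
    exact ⟨G.cov n, hnt, by rw [hstc, hst],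
      ⟨w', hw', luLe_trans (luLe_mono hL hU hvw) hww'⟩⟩
  · exact ⟨n, ht, hst, hv⟩

lemma coveredBy_init {Q X : Type*} {A : TA Q X} (G : ASG A) :
    CoveredBy G (A.q0, zeroVal X) := by
  have h0 : zeroVal X ∈ G.zone G.init := by
    rw [G.g1_zone]; exact ⟨0, (delay_zero _).symm⟩
  exact coveredBy_of_mem_aLU G G.init G.g1_st ⟨zeroVal X, h0, luLe_refl _ _ _⟩

lemma coveredBy_step {Q X : Type*} {A : TA Q X} (G : ASG A) {c c' : Q × Val X}
    (hs : step A c c') (hc : CoveredBy G c) : CoveredBy G c' := by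
  rcases hc with ⟨n, hnt, hst, w, hw, hvw⟩
  rcases hs with ⟨hq, δ, hδ⟩ | ⟨g, R, htr, hg, hv'⟩
  · -- delay step
    refine coveredBy_of_mem_aLU G n (by rw [hst, hq]) ?_
    rw [hδ]
    exact ⟨delay w δ, asg_zone_timeElapsed G n w hw δ, luLe_delay δ hvw⟩
  · -- action step
    have htr' : (G.st n, g, R, c'.1) ∈ A.trans := by rw [hst]; exact htr
    have hmem : c'.2 ∈ post g R (aLU (G.Lb n) (G.Ub n) (G.zone n)) := by
      refine ⟨c.2, ⟨w, hw, hvw⟩, hg, 0, ?_⟩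
      rw [hv', delay_zero]
    by_cases hpost : post g R (G.zone n) = ∅
    · rw [G.i1 n g R c'.1 htr' hpost] at hmem
      exact absurd hmem (Set.notMem_empty _)
    · rcases G.g2 n hnt g R c'.1 htr' hpost with ⟨n', hedge, hst', hz'⟩
      have hsub := G.i2 n n' hedge g R (by rw [hst']; exact htr') hz'
      exact coveredBy_of_mem_aLU G n' hst' (hsub hmem)

/-- `A` has an accepting run iff some node of the ASG with an accepting
state and nonempty zone is reachable from the initial node by edges. -/
theorem stmt_2 {Q X : Type*} [Finite Q] [Finite X] (A : TA Q X) (hT : A.trans.Finite)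
    (G : ASG A) :
    (∃ (q : Q) (v : Val X), Reach A (A.q0, zeroVal X) (q, v) ∧ q ∈ A.acc) ↔
    (∃ n : G.Node, Relation.ReflTransGen G.edge G.init n ∧
      G.st n ∈ A.acc ∧ G.zone n ≠ (∅ : Set (Val X))) := by
  constructor
  · rintro ⟨q, v, hreach, hacc⟩
    have hcov : CoveredBy G (q, v) := by
      have : ∀ c : Q × Val X, Reach A (A.q0, zeroVal X) c → CoveredBy G c := by
        intro c hc
        induction hc with
        | refl => exact coveredBy_init G
        | tail _ hstep ih => exact coveredBy_step G hstep ih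
      exact this (q, v) hreach
    rcases hcov with ⟨n, _, hst, w, hw, _⟩
    exact ⟨n, G.reach n, by rw [hst]; exact hacc, fun h => (h ▸ hw : w ∈ (∅ : Set (Val X)))⟩
  · rintro ⟨n, _, hacc, hne⟩
    rcases Set.nonempty_iff_ne_empty.mpr hne with ⟨v, hv⟩
    exact ⟨G.st n, v, asg_sound G n v hv, hacc⟩
end

section
/- Let L₁, U₁ and L₂, U₂ be LU-bound functions with L₂(x) ≤ L₁(x) and U₂(x) ≤ U₁(x) for every clock x, and let W, W₁, W₂ be sets of valuations. If W ⊆ a_{L₁U₁}(W₁) and W₁ ⊆ a_{L₂U₂}(W₂), then W ⊆ a_{L₂U₂}(W₂). Equivalently at the level of valuations: if v ⊑_{L₁U₁} v₁ and v₁ ⊑_{L₂U₂} v₂, then v ⊑_{L₂U₂} v₂. -/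
lemma ltVal_mono_b {b b' : Bnd} {r : NNReal} (hb : b' ≤ b) (h : Bnd.ltVal b r) :
    Bnd.ltVal b' r := by
  intro n hn
  subst hn
  cases b with
  | none => simp [WithBot.none_eq_bot] at hb
  | some m =>
    have hnm : n ≤ m := by
      rw [show (some m : Bnd) = (m : Bnd) from rfl] at hb
      exact_mod_cast hb
    exact lt_of_le_of_lt (by exact_mod_cast hnm) (h m rfl)

lemma ltVal_mono_r {b : Bnd} {r r' : NNReal} (hr : r ≤ r') (h : Bnd.ltVal b r) :
    Bnd.ltVal b r' := fun n hn => lt_of_lt_of_le (h n hn) hr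

/-- mixed transitivity of LU-abstractions for decreasing bounds. -/
theorem stmt_13 {X : Type*} [Finite X] (L₁ U₁ L₂ U₂ : X → Bnd)
    (hL : ∀ x, L₂ x ≤ L₁ x) (hU : ∀ x, U₂ x ≤ U₁ x) :
    (∀ W W₁ W₂ : Set (Val X),
      W ⊆ aLU L₁ U₁ W₁ → W₁ ⊆ aLU L₂ U₂ W₂ → W ⊆ aLU L₂ U₂ W₂) ∧
    (∀ v v₁ v₂ : Val X, luLe L₁ U₁ v v₁ → luLe L₂ U₂ v₁ v₂ → luLe L₂ U₂ v v₂) := by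
  have key : ∀ v v₁ v₂ : Val X, luLe L₁ U₁ v v₁ → luLe L₂ U₂ v₁ v₂ → luLe L₂ U₂ v v₂ := by
    intro v v₁ v₂ h1 h2 x
    obtain ⟨h1l, h1u⟩ := h1 x
    obtain ⟨h2l, h2u⟩ := h2 x
    constructor
    · intro hlt
      rcases lt_or_ge (v₂ x) (v₁ x) with h | h
      · exact h2l h
      · have : v₁ x < v x := lt_of_le_of_lt h hlt
        exact ltVal_mono_r h (ltVal_mono_b (hL x) (h1l this))
    · intro hlt
      rcases lt_or_ge (v x) (v₁ x) with h | h
      · exact ltVal_mono_b (hU x) (h1u h)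
      · have : v₁ x < v₂ x := lt_of_le_of_lt h hlt
        exact ltVal_mono_r h (h2u this)
  refine ⟨?_, key⟩
  intro W W₁ W₂ hW hW₁ v hv
  obtain ⟨v₁, hv₁, h1⟩ := hW hv
  obtain ⟨v₂, hv₂, h2⟩ := hW₁ hv₁
  exact ⟨v₂, hv₂, key v v₁ v₂ h1 h2⟩
end
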